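/- If f is a log-concave density on ℝ with median m (so I(1/2) = f(m) where I(p) = f(F^{−1}(p)) is concave on (0,1)), then sup_{x∈ℝ} f(x) ≤ 2 f(m). -/

import Mathlib

open MeasureTheory Real Set

private lemma aux_exp_integrableOn_Iic (c m : ℝ) (hc : 0 < c) :
    IntegrableOn (fun y => Real.exp (c * (y - m))) (Set.Iic m) := by
  have A : MeasurableEmbedding (fun x : ℝ => -x) :=
    (Homeomorph.neg ℝ).isClosedEmbedding.measurableEmbedding
  have hmap : (volume : Measure ℝ).map (fun x : ℝ => -x) = volume :=
    Measure.map_neg_eq_self (volume : Measure ℝ)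
  have key : IntegrableOn ((fun y => Real.exp (c * (y - m))) ∘ (fun x : ℝ => -x))
      ((fun x : ℝ => -x) ⁻¹' (Set.Iic m)) (volume : Measure ℝ) := by
    have hpre : (fun x : ℝ => -x) ⁻¹' (Set.Iic m) = Set.Ici (-m) := by
      ext u; simp [neg_le]
    rw [hpre, integrableOn_Ici_iff_integrableOn_Ioi]
    have h1 : IntegrableOn (fun u : ℝ => Real.exp (-c * u) * Real.exp (-(c * m)))
        (Set.Ioi (-m)) := (exp_neg_integrableOn_Ioi (-m) hc).mul_const _
    refine h1.congr_fun ?_ measurableSet_Ioi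
    intro u _
    simp only [Function.comp, ← Real.exp_add]
    ring_nf
  have := (A.integrableOn_map_iff (μ := (volume : Measure ℝ))
      (f := fun y => Real.exp (c * (y - m))) (s := Set.Iic m)).mpr key
  rwa [hmap] at this

private lemma aux_exp_integral_Iic (c m : ℝ) (hc : 0 < c) :
    ∫ y in Set.Iic m, Real.exp (c * (y - m)) = 1 / c := by
  have h1 := integral_comp_neg_Ioi (-m) (fun y => Real.exp (c * (y - m)))
  rw [neg_neg] at h1
  rw [← h1]
  have h2 : (fun x : ℝ => Real.exp (c * (-x - m)))
      = fun x : ℝ => (fun v : ℝ => Real.exp (-v - c * m)) (c * x) := by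
    funext x; congr 1; ring
  calc ∫ x in Set.Ioi (-m), Real.exp (c * (-x - m))
      = ∫ x in Set.Ioi (-m), (fun v : ℝ => Real.exp (-v - c * m)) (c * x) := by rw [h2]
    _ = c⁻¹ • ∫ v in Set.Ioi (c * (-m)), Real.exp (-v - c * m) :=
        integral_comp_mul_left_Ioi (fun v : ℝ => Real.exp (-v - c * m)) (-m) hc
    _ = 1 / c := by
        have h3 : ∫ v in Set.Ioi (c * (-m)), Real.exp (-v - c * m)
            = ∫ v in Set.Ioi (c * (-m)), Real.exp (-v) * Real.exp (-(c * m)) := by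
          congr 1; funext v; rw [← Real.exp_add]; ring_nf
        rw [h3, integral_mul_const, integral_exp_neg_Ioi]
        rw [smul_eq_mul, ← Real.exp_add]
        norm_num

private lemma aux_exp_integral_Ioo (c m x : ℝ) (hc : 0 < c) (hx : m < x) :
    ∫ y in Set.Ioo m x, Real.exp (c * (y - m)) = (Real.exp (c * (x - m)) - 1) / c := by
  rw [← MeasureTheory.integral_Ioc_eq_integral_Ioo, ← intervalIntegral.integral_of_le hx.le]
  have D : ∀ y : ℝ, HasDerivAt (fun z => Real.exp (c * (z - m)) / c)
      (Real.exp (c * (y - m))) y := by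
    intro y
    have h1 : HasDerivAt (fun z : ℝ => c * (z - m)) c y := by
      simpa using ((hasDerivAt_id y).sub_const m).const_mul c
    have h2 := (Real.hasDerivAt_exp (c * (y - m))).comp y h1
    have h3 := h2.div_const c
    simpa [mul_div_cancel_right₀ _ (ne_of_gt hc)] using h3
  rw [intervalIntegral.integral_eq_sub_of_hasDerivAt (fun y _ => D y)
    (Continuous.intervalIntegrable (by continuity) m x)]
  simp only [sub_self, mul_zero, Real.exp_zero]
  ring

private lemma key_lemma (f : ℝ → ℝ) (m x : ℝ)
    (hf_nn : ∀ x, 0 ≤ f x)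
    (hf_int : Integrable f)
    (hlc : ∀ x y t : ℝ, t ∈ Set.Icc (0:ℝ) 1 →
        f (t * x + (1 - t) * y) ≥ f x ^ t * f y ^ (1 - t))
    (hmed : ∫ y in Set.Iic m, f y = 1 / 2)
    (hioi : ∫ y in Set.Ioi m, f y = 1 / 2)
    (hm : 0 < f m) (hx : m < x) : f x ≤ 2 * f m := by
  by_contra hcon
  push_neg at hcon
  have hfx : 0 < f x := lt_trans (by positivity) hcon
  have hxm : 0 < x - m := sub_pos.2 hx
  set M : ℝ := Real.log (f m) with hM
  set X : ℝ := Real.log (f x) with hX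
  have hb0 : 0 < X - M := sub_pos.2 (Real.log_lt_log hm (by linarith))
  set c : ℝ := (X - M) / (x - m) with hc
  have hc0 : 0 < c := div_pos hb0 hxm
  -- upper bound on Iic m
  have hub : ∀ y ∈ Set.Iic m, f y ≤ f m * Real.exp (c * (y - m)) := by
    intro y hy
    have hy' : y ≤ m := hy
    rcases hy'.eq_or_lt with rfl | hym
    · simp
    rcases (hf_nn y).eq_or_lt with h0 | hfy
    · rw [← h0]; positivity
    have hxy : 0 < x - y := by linarith
    set t : ℝ := (x - m) / (x - y) with htdef
    have ht0 : 0 < t := div_pos hxm hxy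
    have ht1 : t ≤ 1 := by
      rw [div_le_one hxy]; linarith
    have hcomb : t * y + (1 - t) * x = m := by
      have e0 : t * (x - y) = x - m := by rw [htdef, div_mul_cancel₀ _ hxy.ne']
      linear_combination -e0
    have h := hlc y x t ⟨ht0.le, ht1⟩
    rw [hcomb] at h
    set L : ℝ := Real.log (f y) with hL
    have hlog : t * L + (1 - t) * X ≤ M := by
      have h2 : Real.log (f y ^ t * f x ^ (1 - t)) ≤ M :=
        Real.log_le_log (by positivity) h
      rwa [Real.log_mul (by positivity) (by positivity),
        Real.log_rpow hfy, Real.log_rpow hfx] at h2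
    have e1 : t * (x - y) = x - m := by rw [htdef, div_mul_cancel₀ _ hxy.ne']
    have e2 : (1 - t) * (x - y) = m - y := by linear_combination -e1
    have h3 : (x - m) * L + (m - y) * X ≤ (x - y) * M := by
      calc (x - m) * L + (m - y) * X = (t * L + (1 - t) * X) * (x - y) := by
            rw [← e1, ← e2]; ring
        _ ≤ M * (x - y) := mul_le_mul_of_nonneg_right hlog hxy.le
        _ = (x - y) * M := mul_comm _ _
    have h4 : L ≤ M + c * (y - m) := by
      rw [← sub_nonneg]
      have expand : (M + c * (y - m)) - L
          = ((x - y) * M - (m - y) * X - (x - m) * L) / (x - m) := by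
        rw [hc]; field_simp; ring
      rw [expand]
      apply div_nonneg _ hxm.le
      linarith [h3]
    have h5 := Real.exp_le_exp.mpr h4
    rwa [Real.exp_log hfy, Real.exp_add, Real.exp_log hm] at h5
  -- lower bound on Ioo m x
  have hlb : ∀ y ∈ Set.Ioo m x, f m * Real.exp (c * (y - m)) ≤ f y := by
    intro y hy
    obtain ⟨hy1, hy2⟩ := hy
    set t : ℝ := (x - y) / (x - m) with htdef
    have ht0 : 0 ≤ t := div_nonneg (by linarith) (by linarith)
    have ht1 : t ≤ 1 := by
      rw [div_le_one hxm]; linarith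
    have hcomb : t * m + (1 - t) * x = y := by
      have e0 : t * (x - m) = x - y := by rw [htdef, div_mul_cancel₀ _ hxm.ne']
      linear_combination -e0
    have h := hlc m x t ⟨ht0, ht1⟩
    rw [hcomb] at h
    have e : f m * Real.exp (c * (y - m)) = f m ^ t * f x ^ (1 - t) := by
      rw [← Real.exp_log hm, ← Real.exp_log hfx, ← Real.exp_mul, ← Real.exp_mul,
        ← Real.exp_add, ← Real.exp_add]
      congr 1
      rw [← hM, ← hX, hc, htdef]
      field_simp
      ring
    rw [e]
    exact h
  -- integral comparison on Iic m
  have hint_ub : IntegrableOn (fun y => f m * Real.exp (c * (y - m))) (Set.Iic m) :=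
    (aux_exp_integrableOn_Iic c m hc0).const_mul (f m)
  have hIic : (1:ℝ)/2 ≤ f m * (1 / c) := by
    rw [← hmed]
    calc ∫ y in Set.Iic m, f y
        ≤ ∫ y in Set.Iic m, f m * Real.exp (c * (y - m)) :=
          setIntegral_mono_on hf_int.integrableOn hint_ub measurableSet_Iic hub
      _ = f m * ∫ y in Set.Iic m, Real.exp (c * (y - m)) := integral_const_mul _ _
      _ = f m * (1 / c) := by rw [aux_exp_integral_Iic c m hc0]
  have hcle : c ≤ 2 * f m := by
    rw [mul_one_div, le_div_iff₀ hc0] at hIic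
    linarith
  -- integral comparison on Ioo m x
  have hint_lb : IntegrableOn (fun y => f m * Real.exp (c * (y - m))) (Set.Ioo m x) := by
    apply IntegrableOn.mono_set (t := Set.Icc m x) _ Set.Ioo_subset_Icc_self
    exact (Continuous.integrableOn_Icc (by continuity))
  have hIoo : (f x - f m) / c ≤ 1 / 2 := by
    have hcx : c * (x - m) = X - M := by
      rw [hc]; field_simp
    have hval : ∫ y in Set.Ioo m x, f m * Real.exp (c * (y - m))
        = (f x - f m) / c := by
      rw [integral_const_mul, aux_exp_integral_Ioo c m x hc0 hx, hcx]
      rw [Real.exp_sub, Real.exp_log hfx, Real.exp_log hm]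
      field_simp
    calc (f x - f m) / c = ∫ y in Set.Ioo m x, f m * Real.exp (c * (y - m)) := hval.symm
      _ ≤ ∫ y in Set.Ioo m x, f y :=
          setIntegral_mono_on hint_lb hf_int.integrableOn measurableSet_Ioo hlb
      _ ≤ ∫ y in Set.Ioi m, f y :=
          setIntegral_mono_set hf_int.integrableOn
            (ae_of_all _ hf_nn)
            (HasSubset.Subset.eventuallyLE (fun y hy => hy.1))
      _ = 1 / 2 := hioi
  rw [div_le_iff₀ hc0] at hIoo
  nlinarith [hcle, hIoo, hm]

/-- If `f` is a log-concave density on ℝ with median `m`, then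
`sup_x f(x) ≤ 2 f(m)`. -/
theorem stmt_8 (f : ℝ → ℝ) (m : ℝ)
    (hf_nn : ∀ x, 0 ≤ f x)
    (hf_meas : Measurable f)
    (hdens : ∫ x, f x = 1)
    (hlc : ∀ x y t : ℝ, t ∈ Set.Icc (0:ℝ) 1 →
        f (t * x + (1 - t) * y) ≥ f x ^ t * f y ^ (1 - t))
    (hmed : ∫ x in Set.Iic m, f x = 1 / 2) :
    ∀ x, f x ≤ 2 * f m := by
  have hf_int : Integrable f := by
    by_contra h
    rw [integral_undef h] at hdens
    norm_num at hdens
  have hioi : ∫ y in Set.Ioi m, f y = 1 / 2 := by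
    have h := integral_add_compl (measurableSet_Iic (a := m)) hf_int
    rw [compl_Iic] at h
    rw [hdens, hmed] at h
    linarith
  have hm : 0 < f m := by
    rcases (hf_nn m).lt_or_eq with h | h
    · exact h
    exfalso
    by_cases hL : ∀ y < m, f y = 0
    · have hz : ∫ y in Set.Iic m, f y = 0 := by
        rw [setIntegral_congr_fun measurableSet_Iic
          (fun y (hy : y ≤ m) => by
            rcases hy.lt_or_eq with h' | h'
            · exact hL y h'
            · rw [h', ← h])]
        simp
      rw [hz] at hmed; norm_num at hmed
    · by_cases hR : ∀ z, m < z → f z = 0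
      · have hz : ∫ y in Set.Ioi m, f y = 0 := by
          rw [setIntegral_congr_fun measurableSet_Ioi
            (fun y (hy : m < y) => hR y hy)]
          simp
        rw [hz] at hioi; norm_num at hioi
      · push_neg at hL hR
        obtain ⟨y, hym, hy0⟩ := hL
        obtain ⟨z, hmz, hz0⟩ := hR
        have hfy : 0 < f y := (hf_nn y).lt_of_ne (Ne.symm hy0)
        have hfz : 0 < f z := (hf_nn z).lt_of_ne (Ne.symm hz0)
        have hzy : 0 < z - y := by linarith
        set t : ℝ := (z - m) / (z - y) with htdef
        have ht0 : 0 ≤ t := div_nonneg (by linarith) (by linarith)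
        have ht1 : t ≤ 1 := by rw [div_le_one hzy]; linarith
        have hcomb : t * y + (1 - t) * z = m := by
          have e0 : t * (z - y) = z - m := by rw [htdef, div_mul_cancel₀ _ hzy.ne']
          linear_combination -e0
        have hlcp := hlc y z t ⟨ht0, ht1⟩
        rw [hcomb] at hlcp
        have hpos : 0 < f y ^ t * f z ^ (1 - t) := by positivity
        rw [← h] at hlcp
        linarith
  intro x
  rcases lt_trichotomy x m with hlt | heq | hgt
  · -- reflect
    have href := key_lemma (fun y => f (-y)) (-m) (-x)
      (fun y => hf_nn (-y)) hf_int.comp_neg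
      (by
        intro a b t ht
        have h2 := hlc (-a) (-b) t ht
        rw [show t * -a + (1 - t) * -b = -(t * a + (1 - t) * b) by ring] at h2
        exact h2)
      (by rw [integral_comp_neg_Iic, neg_neg]; exact hioi)
      (by rw [integral_comp_neg_Ioi, neg_neg]; exact hmed)
      (by simpa using hm)
      (by linarith)
    simpa using href
  · rw [heq]; linarith
  · exact key_lemma f m x hf_nn hf_int hlc hmed hioi hm hgt
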